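/- For every 1-Lipschitz function h : M₃ → ℝ there exists k ∈ {1,2,3} such that for every m ∈ ℕ there exist 1-Lipschitz functions f, g : M₃ → ℝ with f(x) = h(x) and g(x) = h(x) for all x ∈ M₃ ∖ {u^k_m, v^k_m}, f(u^k_m) − f(v^k_m) = 1, and g(u^k_m) − g(v^k_m) = −1. -/

import Mathlib

/-- Build a metric space from a distance function which vanishes on the diagonal and takes
values in `[1,2]` off the diagonal (the triangle inequality is then automatic). -/
noncomputable def MetricSpace.ofOneTwo {α : Type*} (D : α → α → ℝ)
    (hself : ∀ x, D x x = 0) (hsymm : ∀ x y, D x y = D y x)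
    (hlow : ∀ x y, x ≠ y → 1 ≤ D x y) (hhigh : ∀ x y, D x y ≤ 2) : MetricSpace α :=
  { dist := D
    dist_self := hself
    dist_comm := hsymm
    dist_triangle := by
      intro x y z
      show D x z ≤ D x y + D y z
      rcases eq_or_ne x y with rfl | hxy
      · simp [hself]
      rcases eq_or_ne y z with rfl | hyz
      · simp [hself]
      have h1 := hlow x y hxy
      have h2 := hlow y z hyz
      have h3 := hhigh x z
      linarith
    eq_of_dist_eq_zero := by
      intro x y hxy
      replace hxy : D x y = 0 := hxy
      by_contra h
      have := hlow x y h
      linarith }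

/-- The points of the metric space `M₃`: `a i` for `i : Fin 3` and `u i m, v i m` for
`i : Fin 3`, `m : ℕ`. -/
inductive M3 where
  | a : Fin 3 → M3
  | u : Fin 3 → ℕ → M3
  | v : Fin 3 → ℕ → M3
deriving DecidableEq

namespace M3

/-- One-sided description of the pairs of points of `M₃` at distance `1`:
`d(aᵢ, uʲₘ) = d(aᵢ, vʲₘ) = 1` for `i ≠ j`, and `d(uʲₘ, vʲₘ) = 1`. -/
def one : M3 → M3 → Prop
  | .a i, .u j _ => i ≠ j
  | .a i, .v j _ => i ≠ j
  | .u j m, .v i l => j = i ∧ m = l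
  | _, _ => False

/-- The distance on `M₃`: `0` on the diagonal, `1` on the pairs described by `M3.one`
(in either order), and `2` otherwise. -/
noncomputable def D (p q : M3) : ℝ :=
  open scoped Classical in
  if p = q then 0 else if one p q ∨ one q p then 1 else 2

noncomputable instance : MetricSpace M3 :=
  MetricSpace.ofOneTwo D
    (fun x => by simp [D])
    (fun x y => by
      rcases eq_or_ne x y with rfl | h
      · rfl
      · rw [D, D, if_neg h, if_neg (Ne.symm h)]
        rcases em (one x y ∨ one y x) with h2 | h2
        · rw [if_pos h2, if_pos h2.symm]
        · rw [if_neg h2, if_neg fun hc => h2 hc.symm])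
    (fun x y h => by rw [D, if_neg h]; split_ifs <;> norm_num)
    (fun x y => by rw [D]; split_ifs <;> norm_num)

end M3

/-- A function `f : M → ℝ` is `L`-Lipschitz: `|f x - f y| ≤ L · d(x, y)` for all `x, y`. -/
def LipWith {M : Type*} [MetricSpace M] (L : ℝ) (f : M → ℝ) : Prop :=
  ∀ x y : M, |f x - f y| ≤ L * dist x y

namespace M3

lemma dist_def (p q : M3) : dist p q = M3.D p q := rfl

lemma dist_aa (i j : Fin 3) (h : i ≠ j) : dist (a i) (a j) = 2 := by
  simp [dist_def, D, one, h]

lemma dist_au (i j : Fin 3) (m : ℕ) (h : i ≠ j) : dist (a i) (u j m) = 1 := by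
  simp [dist_def, D, one, h]

lemma dist_av (i j : Fin 3) (m : ℕ) (h : i ≠ j) : dist (a i) (v j m) = 1 := by
  simp [dist_def, D, one, h]

lemma dist_au' (j : Fin 3) (m : ℕ) : dist (a j) (u j m) = 2 := by
  simp [dist_def, D, one]

lemma dist_av' (j : Fin 3) (m : ℕ) : dist (a j) (v j m) = 2 := by
  simp [dist_def, D, one]

lemma dist_uvs (k : Fin 3) (m : ℕ) : dist (u k m) (v k m) = 1 := by
  simp [dist_def, D, one]

lemma dist_uu (i j : Fin 3) (m l : ℕ) (h : ¬(i = j ∧ m = l)) : dist (u i m) (u j l) = 2 := by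
  simp only [dist_def, D, one]; rw [if_neg (by simp; tauto)]; exact if_neg (by simp)

lemma dist_vv (i j : Fin 3) (m l : ℕ) (h : ¬(i = j ∧ m = l)) : dist (v i m) (v j l) = 2 := by
  simp only [dist_def, D, one]; rw [if_neg (by simp; tauto)]; exact if_neg (by simp)

lemma dist_uv2 (i j : Fin 3) (m l : ℕ) (h : ¬(i = j ∧ m = l)) : dist (u i m) (v j l) = 2 := by
  simp only [dist_def, D, one]; rw [if_neg (by simp)]; exact if_neg (by simp; tauto)

lemma dist_vu2 (i j : Fin 3) (m l : ℕ) (h : ¬(j = i ∧ l = m)) : dist (v i m) (u j l) = 2 := by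
  simp only [dist_def, D, one]; rw [if_neg (by simp)]; exact if_neg (by simp; tauto)

lemma third : ∀ j k : Fin 3, ∃ i : Fin 3, i ≠ k ∧ i ≠ j := by decide

end M3

lemma pick_t (x y z : ℝ) (hxy : |x - y| ≤ 1) (hxz : |x - z| ≤ 2) (hyz : |y - z| ≤ 2) :
    ∃ t : ℝ, |t - x| ≤ 1/2 ∧ |t - y| ≤ 1/2 ∧ |t - z| ≤ 3/2 := by
  rw [abs_le] at hxy hxz hyz
  set t := max (max x y - 1/2) (z - 3/2) with htdef
  have e1 : x ≤ max x y := le_max_left x y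
  have e2 : y ≤ max x y := le_max_right x y
  have l1 : max x y - 1/2 ≤ t := le_max_left _ _
  have l2 : z - 3/2 ≤ t := le_max_right _ _
  have u1 : t ≤ x + 1/2 :=
    max_le (by linarith [max_le (show x ≤ x + 1 by linarith) (show y ≤ x + 1 by linarith)])
      (by linarith)
  have u2 : t ≤ y + 1/2 :=
    max_le (by linarith [max_le (show x ≤ y + 1 by linarith) (show y ≤ y + 1 by linarith)])
      (by linarith)
  have u3 : t ≤ z + 3/2 :=
    max_le (by linarith [max_le (show x ≤ z + 2 by linarith) (show y ≤ z + 2 by linarith)])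
      (by linarith)
  exact ⟨t, by rw [abs_le]; exact ⟨by linarith, by linarith⟩,
    by rw [abs_le]; exact ⟨by linarith, by linarith⟩,
    by rw [abs_le]; exact ⟨by linarith, by linarith⟩⟩

lemma ext_lip (h : M3 → ℝ) (hh : LipWith 1 h) (k : Fin 3) (m : ℕ) (b c : ℝ)
    (hbc : |b - c| ≤ 1)
    (hb : ∀ w : M3, w ≠ M3.u k m → w ≠ M3.v k m → |b - h w| ≤ dist (M3.u k m) w)
    (hc : ∀ w : M3, w ≠ M3.u k m → w ≠ M3.v k m → |c - h w| ≤ dist (M3.v k m) w) :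
    LipWith 1 (fun x => if x = M3.u k m then b else if x = M3.v k m then c else h x) := by
  have huv : (M3.u k m : M3) ≠ M3.v k m := by simp
  have duv : dist (M3.u k m) (M3.v k m) = 1 := M3.dist_uvs k m
  intro x y
  simp only
  by_cases hxu : x = M3.u k m
  · subst hxu
    by_cases hyu : y = M3.u k m
    · subst hyu; simp
    by_cases hyv : y = M3.v k m
    · subst hyv; rw [if_pos rfl, if_neg hyu, if_pos rfl, duv]; linarith
    · rw [if_pos rfl, if_neg hyu, if_neg hyv, one_mul]; exact hb y hyu hyv
  by_cases hxv : x = M3.v k m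
  · subst hxv
    by_cases hyu : y = M3.u k m
    · subst hyu; rw [if_neg hxu, if_pos rfl, if_pos rfl, dist_comm, duv, abs_sub_comm]
      linarith
    by_cases hyv : y = M3.v k m
    · subst hyv; simp
    · rw [if_neg hxu, if_pos rfl, if_neg hyu, if_neg hyv, one_mul]; exact hc y hyu hyv
  by_cases hyu : y = M3.u k m
  · subst hyu; rw [if_neg hxu, if_neg hxv, if_pos rfl, abs_sub_comm, dist_comm, one_mul]
    exact hb x hxu hxv
  by_cases hyv : y = M3.v k m
  · subst hyv; rw [if_neg hxu, if_neg hxv, if_neg hyu, if_pos rfl, abs_sub_comm, dist_comm,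
      one_mul]
    exact hc x hxu hxv
  · rw [if_neg hxu, if_neg hxv, if_neg hyu, if_neg hyv]; exact hh x y

lemma key_bound (h : M3 → ℝ) (hh : LipWith 1 h) (k : Fin 3) (t : ℝ)
    (ht1 : ∀ i : Fin 3, i ≠ k → |t - h (M3.a i)| ≤ 1/2)
    (ht2 : |t - h (M3.a k)| ≤ 3/2) (m : ℕ) (r : ℝ) (hr : |r| ≤ 1/2) :
    ∀ w : M3, w ≠ M3.u k m → w ≠ M3.v k m →
      |t + r - h w| ≤ dist (M3.u k m) w ∧ |t + r - h w| ≤ dist (M3.v k m) w := by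
  have habs : ∀ s q : ℝ, |t - s| ≤ q → |t + r - s| ≤ q + 1/2 := by
    intro s q hq
    rw [abs_le] at hq hr ⊢; constructor <;> linarith
  -- the key estimate for points of the form u j l / v j l
  have hmid : ∀ (j : Fin 3) (w : M3), (∃ l, w = M3.u j l) ∨ (∃ l, w = M3.v j l) →
      |t - h w| ≤ 3/2 := by
    intro j w hw
    obtain ⟨i, hik, hij⟩ := M3.third j k
    have hle := hh (M3.a i) w
    have hdi : dist (M3.a i) w = 1 := by
      rcases hw with ⟨l, rfl⟩ | ⟨l, rfl⟩
      exacts [M3.dist_au i j l hij, M3.dist_av i j l hij]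
    rw [hdi, one_mul] at hle
    have h1 := ht1 i hik
    rw [abs_le] at hle h1 ⊢
    exact ⟨by linarith [hle.1, hle.2, h1.1, h1.2], by linarith [hle.1, hle.2, h1.1, h1.2]⟩
  intro w hw1 hw2
  match w with
  | M3.a i =>
    by_cases hik : i = k
    · have d1 : dist (M3.u k m) (M3.a i) = 2 := by
        rw [dist_comm, hik]; exact M3.dist_au' k m
      have d2 : dist (M3.v k m) (M3.a i) = 2 := by
        rw [dist_comm, hik]; exact M3.dist_av' k m
      have h2 := habs _ _ ht2
      rw [d1, d2, hik]
      exact ⟨by linarith, by linarith⟩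
    · have d1 : dist (M3.u k m) (M3.a i) = 1 := by
        rw [dist_comm]; exact M3.dist_au i k m hik
      have d2 : dist (M3.v k m) (M3.a i) = 1 := by
        rw [dist_comm]; exact M3.dist_av i k m hik
      have h2 := habs _ _ (ht1 i hik)
      rw [d1, d2]; exact ⟨by linarith, by linarith⟩
  | M3.u j l =>
    have d1 : dist (M3.u k m) (M3.u j l) = 2 :=
      M3.dist_uu k j m l (by rintro ⟨rfl, rfl⟩; exact hw1 rfl)
    have d2 : dist (M3.v k m) (M3.u j l) = 2 :=
      M3.dist_vu2 k j m l (by rintro ⟨rfl, rfl⟩; exact hw1 rfl)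
    have h2 := habs _ _ (hmid j _ (Or.inl ⟨l, rfl⟩))
    rw [d1, d2]; exact ⟨by linarith, by linarith⟩
  | M3.v j l =>
    have d1 : dist (M3.u k m) (M3.v j l) = 2 :=
      M3.dist_uv2 k j m l (by rintro ⟨rfl, rfl⟩; exact hw2 rfl)
    have d2 : dist (M3.v k m) (M3.v j l) = 2 :=
      M3.dist_vv k j m l (by rintro ⟨rfl, rfl⟩; exact hw2 rfl)
    have h2 := habs _ _ (hmid j _ (Or.inr ⟨l, rfl⟩))
    rw [d1, d2]; exact ⟨by linarith, by linarith⟩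

/-- For every `1`-Lipschitz `h : M₃ → ℝ` there is a `k ∈ {1,2,3}` such that for every `m`
there are `1`-Lipschitz functions `f, g : M₃ → ℝ` agreeing with `h` off `{uᵏₘ, vᵏₘ}` with
`f(uᵏₘ) - f(vᵏₘ) = 1` and `g(uᵏₘ) - g(vᵏₘ) = -1`. -/
theorem M3_flip (h : M3 → ℝ) (hh : LipWith 1 h) :
    ∃ k : Fin 3, ∀ m : ℕ, ∃ f g : M3 → ℝ,
      LipWith 1 f ∧ LipWith 1 g ∧
      (∀ x : M3, x ≠ M3.u k m → x ≠ M3.v k m → f x = h x ∧ g x = h x) ∧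
      f (M3.u k m) - f (M3.v k m) = 1 ∧ g (M3.u k m) - g (M3.v k m) = -1 := by
  set A : Fin 3 → ℝ := fun i => h (M3.a i) with hA
  have hAd : ∀ i j : Fin 3, i ≠ j → |A i - A j| ≤ 2 := by
    intro i j hij
    have hle := hh (M3.a i) (M3.a j)
    rw [M3.dist_aa i j hij, one_mul] at hle; linarith [hle]
  -- find k and the two other indices with close values
  obtain ⟨k, i, j, hik, hjk, hcov, hclose⟩ :
      ∃ k i j : Fin 3, i ≠ k ∧ j ≠ k ∧ (∀ i', i' ≠ k → i' = i ∨ i' = j) ∧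
        |A i - A j| ≤ 1 := by
    by_cases h01 : |A 0 - A 1| ≤ 1
    · exact ⟨2, 0, 1, by decide, by decide, by decide, h01⟩
    by_cases h12 : |A 1 - A 2| ≤ 1
    · exact ⟨0, 1, 2, by decide, by decide, by decide, h12⟩
    refine ⟨1, 0, 2, by decide, by decide, by decide, ?_⟩
    have b01 := hAd 0 1 (by decide)
    have b12 := hAd 1 2 (by decide)
    have b02 := hAd 0 2 (by decide)
    rw [abs_le] at b02
    rw [not_le] at h01 h12
    rw [abs_le] at b01 b12 ⊢
    rcases lt_abs.mp h01 with h1 | h1 <;> rcases lt_abs.mp h12 with h2 | h2 <;>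
      constructor <;> linarith
  obtain ⟨t, hti, htj, htk⟩ := pick_t (A i) (A j) (A k) hclose (hAd i k hik) (hAd j k hjk)
  have ht1 : ∀ i' : Fin 3, i' ≠ k → |t - h (M3.a i')| ≤ 1/2 := by
    intro i' hi'
    rcases hcov i' hi' with rfl | rfl
    exacts [hti, htj]
  refine ⟨k, fun m => ?_⟩
  have huv : (M3.u k m : M3) ≠ M3.v k m := fun h => by cases h
  have hb := key_bound h hh k t ht1 htk m (1/2) (by rw [abs_le]; norm_num)
  have hc := key_bound h hh k t ht1 htk m (-(1/2)) (by rw [abs_le]; norm_num)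
  refine ⟨fun x => if x = M3.u k m then t + 1/2 else if x = M3.v k m then t + -(1/2) else h x,
    fun x => if x = M3.u k m then t + -(1/2) else if x = M3.v k m then t + 1/2 else h x,
    ?_, ?_, ?_, ?_, ?_⟩
  · exact ext_lip h hh k m _ _
      (by rw [show t + 1/2 - (t + -(1/2)) = 1 by ring]; rw [abs_le]; norm_num)
      (fun w h1 h2 => (hb w h1 h2).1) (fun w h1 h2 => (hc w h1 h2).2)
  · exact ext_lip h hh k m _ _
      (by rw [show t + -(1/2) - (t + 1/2) = -1 by ring]; rw [abs_le]; norm_num)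
      (fun w h1 h2 => (hc w h1 h2).1) (fun w h1 h2 => (hb w h1 h2).2)
  · intro x hx1 hx2
    constructor <;> simp only [if_neg hx1, if_neg hx2]
  · beta_reduce; rw [if_pos rfl, if_neg (Ne.symm huv), if_pos rfl]; ring
  · beta_reduce; rw [if_pos rfl, if_neg (Ne.symm huv), if_pos rfl]; ring
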